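/- Let H be a finite-dimensional complex inner product space and let S : ℂ^k → H and T : ℂ^ℓ → H be linear maps. Then det([S,T]* [S,T]) ≤ det(S* S) · det(T* T), where [S,T] is the combined map ℂ^k ⊕ ℂ^ℓ → H. Moreover, equality holds if and only if either the right-hand side is zero or the ranges of S and T are orthogonal. -/

import Mathlib

open scoped ComplexOrder
open Matrix

/-- The combined map `[S,T] : ℂ^ι ⊕ ℂ^κ → H`, `(x, y) ↦ S x + T y`. -/
noncomputable def combinedMap {ι κ H : Type*}
    [NormedAddCommGroup H] [InnerProductSpace ℂ H]
    (S : EuclideanSpace ℂ ι →ₗ[ℂ] H) (T : EuclideanSpace ℂ κ →ₗ[ℂ] H) :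
    EuclideanSpace ℂ (ι ⊕ κ) →ₗ[ℂ] H :=
  S ∘ₗ ((WithLp.linearEquiv 2 ℂ (ι → ℂ)).symm.toLinearMap ∘ₗ LinearMap.funLeft ℂ ℂ Sum.inl ∘ₗ
      (WithLp.linearEquiv 2 ℂ (ι ⊕ κ → ℂ)).toLinearMap) +
    T ∘ₗ ((WithLp.linearEquiv 2 ℂ (κ → ℂ)).symm.toLinearMap ∘ₗ LinearMap.funLeft ℂ ℂ Sum.inr ∘ₗ
      (WithLp.linearEquiv 2 ℂ (ι ⊕ κ → ℂ)).toLinearMap)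

open scoped MatrixOrder in
lemma aux_det_le {n : Type*} [Fintype n] [DecidableEq n] {X Y : Matrix n n ℂ}
    (hX : X.PosSemidef) (hY : Y.PosSemidef) (hD : (X + Y).PosDef) :
    X.det ≤ (X + Y).det ∧ (X.det = (X + Y).det ↔ Y = 0) := by
  set D := X + Y with hDdef
  have hDpsd := hD.posSemidef
  set s := CFC.sqrt D with hs
  have hss : s * s = D := CFC.sqrt_mul_sqrt_self D hDpsd.nonneg
  have hsH : s.IsHermitian := (CFC.sqrt_nonneg D).posSemidef.1
  have hdetD : IsUnit D.det := (Matrix.isUnit_iff_isUnit_det D).mp hD.isUnit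
  have hdets : IsUnit s.det := by
    have h2 : s.det * s.det = D.det := by rw [← det_mul, hss]
    exact isUnit_of_mul_isUnit_left (h2 ▸ hdetD)
  set t := s⁻¹ with ht
  have hts : t * s = 1 := nonsing_inv_mul s hdets
  have hst : s * t = 1 := mul_nonsing_inv s hdets
  have htH : t.IsHermitian := by
    rw [Matrix.IsHermitian, ht, conjTranspose_nonsing_inv, hsH.eq]
  set M := t * X * t with hM'
  set N := t * Y * t with hN'
  have hM : M.PosSemidef := by
    have := hX.conjTranspose_mul_mul_same t
    rwa [htH.eq] at this
  have hN : N.PosSemidef := by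
    have := hY.conjTranspose_mul_mul_same t
    rwa [htH.eq] at this
  have hMN : M + N = 1 := by
    have : t * D * t = 1 := by
      rw [← hss, ← Matrix.mul_assoc t s s, hts, Matrix.one_mul, hst]
    calc M + N = t * (X + Y) * t := by rw [hM', hN', Matrix.mul_add, Matrix.add_mul]
    _ = 1 := this
  have hMH := hM.1
  have hle1 : ∀ i, hMH.eigenvalues i ≤ 1 := by
    intro i
    set v : n → ℂ := ⇑(hMH.eigenvectorBasis i) with hv'
    have hv := hMH.mulVec_eigenvectorBasis i
    have h0 := hN.dotProduct_mulVec_nonneg v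
    have hNM : N = 1 - M := by rw [← hMN]; abel
    have hvv : star v ⬝ᵥ v = 1 := by
      have h1 : ‖hMH.eigenvectorBasis i‖ = 1 := hMH.eigenvectorBasis.orthonormal.1 i
      have : (inner ℂ (hMH.eigenvectorBasis i) (hMH.eigenvectorBasis i) : ℂ) = star v ⬝ᵥ v :=
        (EuclideanSpace.inner_eq_star_dotProduct _ _).trans (dotProduct_comm _ _)
      rw [← this, inner_self_eq_norm_sq_to_K, h1]
      norm_num
    have hNv : N *ᵥ v = (1 - (hMH.eigenvalues i : ℂ)) • v := by
      rw [hNM, Matrix.sub_mulVec, Matrix.one_mulVec, hv]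
      ext j
      simp [Complex.real_smul]
      rw [show v j = hMH.eigenvectorBasis i j from rfl]
      ring
    rw [hNv, dotProduct_smul, hvv, smul_eq_mul, mul_one] at h0
    have : (0:ℝ) ≤ 1 - hMH.eigenvalues i := by
      rwa [show ((1:ℂ) - (hMH.eigenvalues i : ℂ)) = ((1 - hMH.eigenvalues i : ℝ) : ℂ) by push_cast; ring,
        Complex.zero_le_real] at h0
    linarith
  have hpos : ∀ i, 0 ≤ hMH.eigenvalues i := fun i => hM.eigenvalues_nonneg i
  set p := ∏ i, hMH.eigenvalues i with hp'
  have hp1 : p ≤ 1 := Finset.prod_le_one (fun i _ => hpos i) (fun i _ => hle1 i)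
  have hp0 : (0:ℝ) ≤ p := Finset.prod_nonneg (fun i _ => hpos i)
  have hdetM : M.det = (p : ℂ) := by
    rw [hMH.det_eq_prod_eigenvalues, hp']
    push_cast
    rfl
  have hXsMs : X = s * M * s := by
    calc X = (s * t) * X * (t * s) := by rw [hst, hts, Matrix.one_mul, Matrix.mul_one]
    _ = s * M * s := by simp only [hM', Matrix.mul_assoc]
  have hYsNs : Y = s * N * s := by
    calc Y = (s * t) * Y * (t * s) := by rw [hst, hts, Matrix.one_mul, Matrix.mul_one]
    _ = s * N * s := by simp only [hN', Matrix.mul_assoc]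
  have hdetX : X.det = D.det * (p : ℂ) := by
    rw [hXsMs, det_mul, det_mul, hdetM, ← hss, det_mul]
    ring
  set q := ∏ i, hD.1.eigenvalues i with hq'
  have hq0 : (0:ℝ) < q := Finset.prod_pos (fun i _ => hD.eigenvalues_pos i)
  have hdetDq : D.det = (q : ℂ) := by
    rw [hD.1.det_eq_prod_eigenvalues, hq']
    push_cast
    rfl
  constructor
  · rw [hdetX, hdetDq, show ((q:ℂ) * (p:ℂ)) = ((q*p : ℝ) : ℂ) by push_cast; ring,
      Complex.real_le_real]
    nlinarith
  constructor
  · intro heq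
    rw [hdetX, hdetDq, show ((q:ℂ) * (p:ℂ)) = ((q*p : ℝ) : ℂ) by push_cast; ring] at heq
    have hqp : q * p = q := Complex.ofReal_inj.mp heq
    have hpone : p = 1 := by
      have := hq0.ne'
      field_simp at hqp
      tauto
    have hall : ∀ i, hMH.eigenvalues i = 1 := by
      intro j
      by_contra hj
      have hjlt : hMH.eigenvalues j < 1 := lt_of_le_of_ne (hle1 j) hj
      have hrest : ∏ i ∈ Finset.univ.erase j, hMH.eigenvalues i ≤ 1 :=
        Finset.prod_le_one (fun i _ => hpos i) (fun i _ => hle1 i)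
      have hrest0 : (0:ℝ) ≤ ∏ i ∈ Finset.univ.erase j, hMH.eigenvalues i :=
        Finset.prod_nonneg (fun i _ => hpos i)
      have hpe : p = hMH.eigenvalues j * ∏ i ∈ Finset.univ.erase j, hMH.eigenvalues i :=
        (Finset.mul_prod_erase _ _ (Finset.mem_univ j)).symm
      have hmul : hMH.eigenvalues j * (∏ i ∈ Finset.univ.erase j, hMH.eigenvalues i) ≤
          1 * (∏ i ∈ Finset.univ.erase j, hMH.eigenvalues i) :=
        mul_le_mul_of_nonneg_right (hle1 j) hrest0
      have hr1 : (∏ i ∈ Finset.univ.erase j, hMH.eigenvalues i) = 1 := by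
        rw [hpone] at hpe
        nlinarith
      rw [hr1, mul_one] at hpe
      rw [hpone] at hpe
      exact hj hpe.symm
    have hMone : M = 1 := by
      have hspec := hMH.spectral_theorem
      have hdiag : Matrix.diagonal (RCLike.ofReal ∘ hMH.eigenvalues) = (1 : Matrix n n ℂ) := by
        rw [show RCLike.ofReal ∘ hMH.eigenvalues = fun _ => (1:ℂ) by
          funext i; simp [hall i]]
        exact Matrix.diagonal_one
      rw [hspec, hdiag, map_one]
    have hNzero : N = 0 := by
      rw [show N = 1 - M from by rw [← hMN]; abel, hMone, sub_self]
    rw [hYsNs, hNzero, Matrix.mul_zero, Matrix.zero_mul]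
  · intro hY0
    rw [hDdef, hY0, add_zero]

lemma aux_posDef_of_det_ne_zero {n : Type*} [Fintype n] [DecidableEq n] {A : Matrix n n ℂ}
    (hA : A.PosSemidef) (hdet : A.det ≠ 0) : A.PosDef := by
  refine posDef_iff_dotProduct_mulVec.mpr
    ⟨hA.1, fun x hx => lt_of_le_of_ne (hA.dotProduct_mulVec_nonneg x) fun h0 => ?_⟩
  have hAx : A *ᵥ x = 0 := (hA.dotProduct_mulVec_zero_iff x).mp h0.symm
  exact hdet (Matrix.exists_mulVec_eq_zero_iff.mp ⟨x, hx, hAx⟩)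

open scoped MatrixOrder in
open Matrix in
lemma aux_fischer {k l n : Type*} [Fintype k] [Fintype l] [Fintype n]
    [DecidableEq k] [DecidableEq l] [DecidableEq n]
    (M1 : Matrix n k ℂ) (M2 : Matrix n l ℂ) :
    ((fromCols M1 M2)ᴴ * fromCols M1 M2).det ≤ (M1ᴴ * M1).det * (M2ᴴ * M2).det ∧
      (((fromCols M1 M2)ᴴ * fromCols M1 M2).det = (M1ᴴ * M1).det * (M2ᴴ * M2).det ↔
        (M1ᴴ * M1).det * (M2ᴴ * M2).det = 0 ∨ M1ᴴ * M2 = 0) := by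
  set A := M1ᴴ * M1 with hA'
  set B := M1ᴴ * M2 with hB'
  set Dm := M2ᴴ * M2 with hD'
  have hGram : (fromCols M1 M2)ᴴ * fromCols M1 M2 = fromBlocks A B Bᴴ Dm := by
    rw [conjTranspose_fromCols_eq_fromRows_conjTranspose, fromRows_mul_fromCols]
    rw [hB', conjTranspose_mul, conjTranspose_conjTranspose]
  by_cases hsing : A.det = 0 ∨ Dm.det = 0
  · have hG0 : ((fromCols M1 M2)ᴴ * fromCols M1 M2).det = 0 := by
      rw [← Matrix.exists_mulVec_eq_zero_iff]
      rcases hsing with h1 | h2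
      · obtain ⟨v, hv, hAv⟩ := Matrix.exists_mulVec_eq_zero_iff.mpr h1
        have hM1v : M1 *ᵥ v = 0 := (conjTranspose_mul_self_mulVec_eq_zero M1 v).mp hAv
        refine ⟨Sum.elim v 0, ?_, ?_⟩
        · intro h
          exact hv (funext fun i => congrFun h (Sum.inl i))
        · rw [← Matrix.mulVec_mulVec, fromCols_mulVec_sumElim, hM1v,
            Matrix.mulVec_zero, add_zero, Matrix.mulVec_zero]
      · obtain ⟨v, hv, hDv⟩ := Matrix.exists_mulVec_eq_zero_iff.mpr h2
        have hM2v : M2 *ᵥ v = 0 := (conjTranspose_mul_self_mulVec_eq_zero M2 v).mp hDv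
        refine ⟨Sum.elim 0 v, ?_, ?_⟩
        · intro h
          exact hv (funext fun i => congrFun h (Sum.inr i))
        · rw [← Matrix.mulVec_mulVec, fromCols_mulVec_sumElim, hM2v,
            Matrix.mulVec_zero, zero_add, Matrix.mulVec_zero]
    have hRHS : A.det * Dm.det = 0 := by
      rcases hsing with h | h <;> simp [h]
    rw [hG0, hRHS]
    exact ⟨le_refl _, by tauto⟩
  · push_neg at hsing
    obtain ⟨hAdet, hDdet⟩ := hsing
    have hApsd : A.PosSemidef := posSemidef_conjTranspose_mul_self M1
    have hDpsd : Dm.PosSemidef := posSemidef_conjTranspose_mul_self M2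
    have hApd : A.PosDef := aux_posDef_of_det_ne_zero hApsd hAdet
    have hDpd : Dm.PosDef := aux_posDef_of_det_ne_zero hDpsd hDdet
    haveI : Invertible A := hApd.isUnit.invertible
    have hGdet : (fromBlocks A B Bᴴ Dm).det = A.det * (Dm - Bᴴ * A⁻¹ * B).det := by
      rw [det_fromBlocks₁₁, invOf_eq_nonsing_inv]
    set W := Bᴴ * A⁻¹ * B with hW'
    have hWpsd : W.PosSemidef := by
      exact hApd.inv.posSemidef.conjTranspose_mul_mul_same B
    have hXpsd : (Dm - W).PosSemidef := by
      rw [← Matrix.PosDef.fromBlocks₁₁ B Dm hApd, ← hGram]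
      exact posSemidef_conjTranspose_mul_self _
    have hXW : Dm - W + W = Dm := by abel
    have key := aux_det_le hXpsd hWpsd (by rw [hXW]; exact hDpd)
    rw [hXW] at key
    have hW0B : W = 0 ↔ B = 0 := by
      constructor
      · intro hW0
        set E := CFC.sqrt A⁻¹ with hE'
        have hEE : E * E = A⁻¹ := CFC.sqrt_mul_sqrt_self A⁻¹ hApd.inv.posSemidef.nonneg
        have hEH : E.IsHermitian := (CFC.sqrt_nonneg A⁻¹).posSemidef.1
        have hdetE : IsUnit E.det := by
          have h2 : E.det * E.det = A⁻¹.det := by rw [← det_mul, hEE]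
          exact isUnit_of_mul_isUnit_left
            (h2 ▸ (Matrix.isUnit_iff_isUnit_det _).mp hApd.inv.isUnit)
        have hEB : (E * B)ᴴ * (E * B) = W := by
          rw [conjTranspose_mul, hEH.eq, Matrix.mul_assoc, ← Matrix.mul_assoc E E B, hEE, hW', Matrix.mul_assoc Bᴴ A⁻¹ B]
        have hEB0 : E * B = 0 := by
          rw [← conjTranspose_mul_self_eq_zero (A := E * B), hEB, hW0]
        calc B = (E⁻¹ * E) * B := by rw [nonsing_inv_mul E hdetE, Matrix.one_mul]
        _ = E⁻¹ * (E * B) := by rw [Matrix.mul_assoc]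
        _ = 0 := by rw [hEB0, Matrix.mul_zero]
      · intro hB0
        rw [hW', hB0, conjTranspose_zero, Matrix.mul_zero]
    rw [hGram, hGdet]
    have hAdetpos : (0:ℂ) < A.det := hApd.det_pos
    constructor
    · exact mul_le_mul_of_nonneg_left key.1 hAdetpos.le
    constructor
    · intro heq
      right
      have : (Dm - W).det = Dm.det := mul_left_cancel₀ hAdet heq
      exact hW0B.mp (key.2.mp this)
    · intro h
      rcases h with h | hB0
      · exact absurd h (mul_ne_zero hAdet hDdet)
      · rw [key.2.mpr (hW0B.mpr hB0)]

open Matrix in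
lemma aux_gram {ι : Type*} [Fintype ι] [DecidableEq ι] {H : Type*}
    [NormedAddCommGroup H] [InnerProductSpace ℂ H] [FiniteDimensional ℂ H]
    (L : EuclideanSpace ℂ ι →ₗ[ℂ] H) :
    LinearMap.det (LinearMap.adjoint L ∘ₗ L) =
      ((LinearMap.toMatrix (EuclideanSpace.basisFun ι ℂ).toBasis
          (stdOrthonormalBasis ℂ H).toBasis L)ᴴ *
        LinearMap.toMatrix (EuclideanSpace.basisFun ι ℂ).toBasis
          (stdOrthonormalBasis ℂ H).toBasis L).det := by
  rw [← LinearMap.det_toMatrix (EuclideanSpace.basisFun ι ℂ).toBasis,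
    LinearMap.toMatrix_comp _ (stdOrthonormalBasis ℂ H).toBasis,
    LinearMap.toMatrix_adjoint]

open Matrix in
lemma aux_combined_matrix {ι κ : Type*} [Fintype ι] [Fintype κ] [DecidableEq ι] [DecidableEq κ]
    {H : Type*} [NormedAddCommGroup H] [InnerProductSpace ℂ H] [FiniteDimensional ℂ H]
    (S : EuclideanSpace ℂ ι →ₗ[ℂ] H) (T : EuclideanSpace ℂ κ →ₗ[ℂ] H) :
    LinearMap.toMatrix (EuclideanSpace.basisFun (ι ⊕ κ) ℂ).toBasis
      (stdOrthonormalBasis ℂ H).toBasis (combinedMap S T) =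
    fromCols
      (LinearMap.toMatrix (EuclideanSpace.basisFun ι ℂ).toBasis
        (stdOrthonormalBasis ℂ H).toBasis S)
      (LinearMap.toMatrix (EuclideanSpace.basisFun κ ℂ).toBasis
        (stdOrthonormalBasis ℂ H).toBasis T) := by
  have key1 : ∀ a : ι, (WithLp.linearEquiv 2 ℂ (ι → ℂ)).symm
      ((LinearMap.funLeft ℂ ℂ (Sum.inl : ι → ι ⊕ κ)) (WithLp.linearEquiv 2 ℂ (ι ⊕ κ → ℂ)
      ((EuclideanSpace.basisFun (ι ⊕ κ) ℂ).toBasis (Sum.inl a)))) =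
      (EuclideanSpace.basisFun ι ℂ).toBasis a := by
    intro a
    ext x
    simp [OrthonormalBasis.coe_toBasis, EuclideanSpace.basisFun_apply,
      EuclideanSpace.single_apply, LinearMap.funLeft_apply, Pi.single_apply]
  have key2 : ∀ a : ι, (WithLp.linearEquiv 2 ℂ (κ → ℂ)).symm
      ((LinearMap.funLeft ℂ ℂ (Sum.inr : κ → ι ⊕ κ)) (WithLp.linearEquiv 2 ℂ (ι ⊕ κ → ℂ)
      ((EuclideanSpace.basisFun (ι ⊕ κ) ℂ).toBasis (Sum.inl a)))) = 0 := by
    intro a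
    ext x
    simp [OrthonormalBasis.coe_toBasis, EuclideanSpace.basisFun_apply,
      EuclideanSpace.single_apply, LinearMap.funLeft_apply]
  have key3 : ∀ a : κ, (WithLp.linearEquiv 2 ℂ (κ → ℂ)).symm
      ((LinearMap.funLeft ℂ ℂ (Sum.inr : κ → ι ⊕ κ)) (WithLp.linearEquiv 2 ℂ (ι ⊕ κ → ℂ)
      ((EuclideanSpace.basisFun (ι ⊕ κ) ℂ).toBasis (Sum.inr a)))) =
      (EuclideanSpace.basisFun κ ℂ).toBasis a := by
    intro a
    ext x
    simp [OrthonormalBasis.coe_toBasis, EuclideanSpace.basisFun_apply,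
      EuclideanSpace.single_apply, LinearMap.funLeft_apply, Pi.single_apply]
  have key4 : ∀ a : κ, (WithLp.linearEquiv 2 ℂ (ι → ℂ)).symm
      ((LinearMap.funLeft ℂ ℂ (Sum.inl : ι → ι ⊕ κ)) (WithLp.linearEquiv 2 ℂ (ι ⊕ κ → ℂ)
      ((EuclideanSpace.basisFun (ι ⊕ κ) ℂ).toBasis (Sum.inr a)))) = 0 := by
    intro a
    ext x
    simp [OrthonormalBasis.coe_toBasis, EuclideanSpace.basisFun_apply,
      EuclideanSpace.single_apply, LinearMap.funLeft_apply]
  have hC1 : ∀ a : ι, combinedMap S T ((EuclideanSpace.basisFun (ι ⊕ κ) ℂ).toBasis (Sum.inl a))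
      = S ((EuclideanSpace.basisFun ι ℂ).toBasis a) := by
    intro a
    simp only [combinedMap, LinearMap.add_apply, LinearMap.comp_apply, LinearEquiv.coe_coe]
    rw [key1 a, key2 a, map_zero, add_zero]
  have hC2 : ∀ a : κ, combinedMap S T ((EuclideanSpace.basisFun (ι ⊕ κ) ℂ).toBasis (Sum.inr a))
      = T ((EuclideanSpace.basisFun κ ℂ).toBasis a) := by
    intro a
    simp only [combinedMap, LinearMap.add_apply, LinearMap.comp_apply, LinearEquiv.coe_coe]
    rw [key3 a, key4 a, map_zero, zero_add]
  ext i j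
  cases j with
  | inl a =>
    rw [fromCols_apply_inl, LinearMap.toMatrix_apply, LinearMap.toMatrix_apply, hC1 a]
  | inr a =>
    rw [fromCols_apply_inr, LinearMap.toMatrix_apply, LinearMap.toMatrix_apply, hC2 a]

lemma aux_orth {ι κ : Type*} [Fintype ι] [Fintype κ] [DecidableEq ι] [DecidableEq κ]
    {H : Type*} [NormedAddCommGroup H] [InnerProductSpace ℂ H] [FiniteDimensional ℂ H]
    (S : EuclideanSpace ℂ ι →ₗ[ℂ] H) (T : EuclideanSpace ℂ κ →ₗ[ℂ] H) :
    (∀ x ∈ LinearMap.range S, ∀ y ∈ LinearMap.range T, (inner ℂ x y : ℂ) = 0) ↔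
      LinearMap.adjoint S ∘ₗ T = 0 := by
  constructor
  · intro h
    refine LinearMap.ext fun v => ?_
    rw [LinearMap.comp_apply, LinearMap.zero_apply, ← inner_self_eq_zero (𝕜 := ℂ),
      LinearMap.adjoint_inner_left, inner_eq_zero_symm]
    exact h _ ⟨_, rfl⟩ _ ⟨v, rfl⟩
  · intro h u hu y hy
    obtain ⟨u, rfl⟩ := hu
    obtain ⟨v, rfl⟩ := hy
    rw [← LinearMap.adjoint_inner_right]
    have : LinearMap.adjoint S (T v) = 0 := by
      rw [← LinearMap.comp_apply, h, LinearMap.zero_apply]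
    rw [this, inner_zero_right]

/-- Subadditivity of log-determinant entropy: `det ([S,T]*[S,T]) ≤ det (S*S) · det (T*T)`,
with equality iff the right-hand side vanishes or the ranges of `S` and `T` are orthogonal. -/
theorem stmt_2 {k ℓ : ℕ} {H : Type*}
    [NormedAddCommGroup H] [InnerProductSpace ℂ H] [FiniteDimensional ℂ H]
    (S : EuclideanSpace ℂ (Fin k) →ₗ[ℂ] H) (T : EuclideanSpace ℂ (Fin ℓ) →ₗ[ℂ] H) :
    LinearMap.det (LinearMap.adjoint (combinedMap S T) ∘ₗ combinedMap S T) ≤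
        LinearMap.det (LinearMap.adjoint S ∘ₗ S) * LinearMap.det (LinearMap.adjoint T ∘ₗ T) ∧
      (LinearMap.det (LinearMap.adjoint (combinedMap S T) ∘ₗ combinedMap S T) =
          LinearMap.det (LinearMap.adjoint S ∘ₗ S) * LinearMap.det (LinearMap.adjoint T ∘ₗ T) ↔
        LinearMap.det (LinearMap.adjoint S ∘ₗ S) * LinearMap.det (LinearMap.adjoint T ∘ₗ T) = 0 ∨
          ∀ x ∈ LinearMap.range S, ∀ y ∈ LinearMap.range T, (inner ℂ x y : ℂ) = 0) := by
  classical
  have hS := aux_gram S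
  have hT := aux_gram T
  have hC := aux_gram (combinedMap S T)
  rw [aux_combined_matrix S T] at hC
  set MS := LinearMap.toMatrix (EuclideanSpace.basisFun (Fin k) ℂ).toBasis
    (stdOrthonormalBasis ℂ H).toBasis S with hMS
  set MT := LinearMap.toMatrix (EuclideanSpace.basisFun (Fin ℓ) ℂ).toBasis
    (stdOrthonormalBasis ℂ H).toBasis T with hMT
  have fis := aux_fischer MS MT
  have horth := aux_orth S T
  have hcompM : LinearMap.toMatrix (EuclideanSpace.basisFun (Fin ℓ) ℂ).toBasis
      (EuclideanSpace.basisFun (Fin k) ℂ).toBasis (LinearMap.adjoint S ∘ₗ T) = MSᴴ * MT := by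
    rw [LinearMap.toMatrix_comp _ (stdOrthonormalBasis ℂ H).toBasis,
      LinearMap.toMatrix_adjoint, hMS, hMT]
  have hzero : (LinearMap.adjoint S ∘ₗ T = 0) ↔ (MSᴴ * MT = 0) := by
    rw [← hcompM]
    exact ⟨fun h => by rw [h, map_zero], fun h => (LinearMap.toMatrix _ _).map_eq_zero_iff.mp h⟩
  rw [hS, hT, hC]
  exact ⟨fis.1, by rw [fis.2, horth, hzero]⟩
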